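/- With the setup of the two-interval syzygy sequence: if d_1 ≠ d_2 and l_1 = l_2, then the minimal positive integer m with I^m = I equals min{ 2n/gcd(n,k), 2·min{t ≥ 1 : tk - l_2 ≡ 0 (mod n)} + 1 }, where the second term is omitted if no positive t satisfies tk ≡ l_2 (mod n). -/

import Mathlib

/-- The combinatorial syzygy sequence of a `k`-subset `I ⊆ ℤ/nℤ` which is the disjoint
union of two cyclic intervals `A₁ = [1, d₁]` and `A₂ = [d₁+l₁+1, d₁+l₁+d₂]` (so `k = d₁+d₂`
and `n-k = l₁+l₂`):
`I^{2t} = (A₁ + tk) ∪ (A₂ + tk)` and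
`I^{2t+1} = (A₁ - l₂ + tk) ∪ ({d₁+1, …, d₁+d₂} + tk)`, all modulo `n`.
In particular `I^0 = I`. -/
def twoIntervalSyzygy (n d₁ l₁ d₂ l₂ : ℕ) (m : ℕ) : Finset (ZMod n) :=
  let k := d₁ + d₂
  let A₁ : Finset (ZMod n) := (Finset.Icc 1 d₁).image (fun a : ℕ => (a : ZMod n))
  let A₂ : Finset (ZMod n) :=
    (Finset.Icc (d₁ + l₁ + 1) (d₁ + l₁ + d₂)).image (fun a : ℕ => (a : ZMod n))
  if m % 2 = 0 then
    (A₁ ∪ A₂).image (fun a => a + ((m / 2 * k : ℕ) : ZMod n))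
  else
    A₁.image (fun a => a + ((m / 2 * k : ℕ) : ZMod n) - (l₂ : ZMod n)) ∪
      (Finset.Icc (d₁ + 1) (d₁ + d₂)).image
        (fun a : ℕ => (a : ZMod n) + ((m / 2 * k : ℕ) : ZMod n))

lemma TwoIntervalSyz.mem_I0 (n d₁ l d₂ : ℕ) [NeZero n] (hn : n = d₁ + l + d₂ + l)
    (hl : 0 < l) (x : ZMod n) :
    x ∈ twoIntervalSyzygy n d₁ l d₂ l 0 ↔
      (1 ≤ x.val ∧ x.val ≤ d₁) ∨ (d₁ + l + 1 ≤ x.val ∧ x.val ≤ d₁ + l + d₂) := by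
  simp only [twoIntervalSyzygy, Nat.zero_div, Nat.zero_mul, Nat.cast_zero, add_zero,
    Finset.image_id', eq_self_iff_true, if_true, Finset.mem_union,
    Finset.mem_image, Finset.mem_Icc]
  constructor
  · rintro (⟨a, ⟨h1, h2⟩, rfl⟩ | ⟨a, ⟨h1, h2⟩, rfl⟩) <;>
      rw [ZMod.val_cast_of_lt (by omega)] <;> [left; right] <;> omega
  · rintro (⟨h1, h2⟩ | ⟨h1, h2⟩)
    · exact Or.inl ⟨x.val, ⟨h1, h2⟩, ZMod.natCast_rightInverse x⟩
    · exact Or.inr ⟨x.val, ⟨h1, h2⟩, ZMod.natCast_rightInverse x⟩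

lemma TwoIntervalSyz.rigid (n d₁ l d₂ : ℕ) [NeZero n] (hn : n = d₁ + l + d₂ + l) (hl : 0 < l)
    (hd₁ : 0 < d₁) (hd₂ : 0 < d₂) (hd : d₁ ≠ d₂) (c : ZMod n)
    (h : (twoIntervalSyzygy n d₁ l d₂ l 0).image (fun a => a + c)
        = twoIntervalSyzygy n d₁ l d₂ l 0) : c = 0 := by
  set I0 := twoIntervalSyzygy n d₁ l d₂ l 0 with hI0
  have hiff : ∀ x : ZMod n, x + c ∈ I0 ↔ x ∈ I0 := by
    intro x
    constructor
    · intro hx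
      rw [← h] at hx
      obtain ⟨y, hy, hyx⟩ := Finset.mem_image.mp hx
      rwa [← add_left_injective c hyx]
    · intro hx
      rw [← h]
      exact Finset.mem_image_of_mem _ hx
  set E : ZMod n → Prop := fun x => x ∈ I0 ∧ x + 1 ∉ I0 with hE
  have hEc : ∀ x : ZMod n, E (x + c) ↔ E x := by
    intro x
    have h1 : x + c + 1 = (x + 1) + c := by ring
    rw [hE]
    simp only [h1, hiff]
  have hmem := TwoIntervalSyz.mem_I0 n d₁ l d₂ hn hl
  have hEchar : ∀ x : ZMod n, E x ↔ x = (d₁ : ZMod n) ∨ x = ((d₁ + l + d₂ : ℕ) : ZMod n) := by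
    intro x
    constructor
    · rintro ⟨hx, hx1⟩
      rw [hmem] at hx
      have hx1' : ¬ ((1 ≤ (x+1).val ∧ (x+1).val ≤ d₁) ∨
          (d₁ + l + 1 ≤ (x+1).val ∧ (x+1).val ≤ d₁ + l + d₂)) := fun hc => hx1 ((hmem _).mpr hc)
      have hxv : ((x.val : ℕ) : ZMod n) = x := ZMod.natCast_rightInverse x
      have hv1 : (x + 1).val = (x.val + 1) % n := by
        conv_lhs => rw [← hxv,
          show ((x.val : ℕ) : ZMod n) + 1 = ((x.val + 1 : ℕ) : ZMod n) by push_cast; ring]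
        exact ZMod.val_natCast n _
      rcases hx with ⟨h1, h2⟩ | ⟨h1, h2⟩
      · left
        have : x.val = d₁ := by
          by_contra hne
          exact hx1' (Or.inl ⟨by rw [hv1, Nat.mod_eq_of_lt (by omega)]; omega,
            by rw [hv1, Nat.mod_eq_of_lt (by omega)]; omega⟩)
        rw [← hxv, this]
      · right
        have : x.val = d₁ + l + d₂ := by
          by_contra hne
          exact hx1' (Or.inr ⟨by rw [hv1, Nat.mod_eq_of_lt (by omega)]; omega,
            by rw [hv1, Nat.mod_eq_of_lt (by omega)]; omega⟩)
        rw [← hxv, this]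
    · have hvd₁ : ((d₁ : ℕ) : ZMod n).val = d₁ := ZMod.val_cast_of_lt (by omega)
      have hvd₂ : ((d₁ + l + d₂ : ℕ) : ZMod n).val = d₁ + l + d₂ := ZMod.val_cast_of_lt (by omega)
      rintro (rfl | rfl)
      · constructor
        · exact (hmem _).mpr (Or.inl ⟨by omega, by omega⟩)
        · intro hc1
          rw [hmem] at hc1
          have : ((d₁ : ZMod n) + 1) = ((d₁ + 1 : ℕ) : ZMod n) := by push_cast; ring
          rw [this, ZMod.val_cast_of_lt (by omega)] at hc1
          omega
      · constructor
        · exact (hmem _).mpr (Or.inr ⟨by omega, by omega⟩)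
        · intro hc1
          rw [hmem] at hc1
          have : (((d₁ + l + d₂ : ℕ) : ZMod n) + 1) = ((d₁ + l + d₂ + 1 : ℕ) : ZMod n) := by
            push_cast; ring
          rw [this, ZMod.val_natCast] at hc1
          rcases Nat.lt_or_ge (d₁ + l + d₂ + 1) n with hlt | hge
          · rw [Nat.mod_eq_of_lt hlt] at hc1; omega
          · have : (d₁ + l + d₂ + 1) % n = d₁ + l + d₂ + 1 - n := by
              rw [Nat.mod_eq_sub_mod hge, Nat.mod_eq_of_lt (by omega)]
            rw [this] at hc1; omega
  have e1 : E ((d₁ : ZMod n)) := (hEchar _).mpr (Or.inl rfl)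
  have e2 : E (((d₁ + l + d₂ : ℕ) : ZMod n)) := (hEchar _).mpr (Or.inr rfl)
  have h1 := (hEchar _).mp ((hEc (d₁ : ZMod n)).mpr e1)
  have h2 := (hEchar _).mp ((hEc ((d₁ + l + d₂ : ℕ) : ZMod n)).mpr e2)
  rcases h1 with h1 | h1
  · have := add_left_cancel (a := (d₁ : ZMod n)) (b := c) (c := 0)
    rw [add_zero] at this
    exact this h1
  · rcases h2 with h2 | h2
    · have hsum : ((d₁ : ZMod n)) + (((d₁ + l + d₂ : ℕ) : ZMod n)) + (c + c)
          = ((d₁ : ZMod n)) + (((d₁ + l + d₂ : ℕ) : ZMod n)) := by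
        calc (d₁ : ZMod n) + ((d₁ + l + d₂ : ℕ) : ZMod n) + (c + c)
            = ((d₁ : ZMod n) + c) + (((d₁ + l + d₂ : ℕ) : ZMod n) + c) := by ring
          _ = ((d₁ + l + d₂ : ℕ) : ZMod n) + (d₁ : ZMod n) := by rw [h1, h2]
          _ = _ := by ring
      have hcc : c + c = 0 := by
        have := add_left_cancel (hsum.trans (add_zero _).symm)
        exact this
      have hc : c = ((l + d₂ : ℕ) : ZMod n) := by
        have : (d₁ : ZMod n) + c = (d₁ : ZMod n) + ((l + d₂ : ℕ) : ZMod n) := by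
          rw [h1]; push_cast; ring
        exact add_left_cancel this
      rw [hc] at hcc
      have hz : (((l + d₂) + (l + d₂) : ℕ) : ZMod n) = 0 := by
        push_cast at hcc ⊢; linear_combination hcc
      have hdvd : n ∣ (l + d₂) + (l + d₂) :=
        (ZMod.natCast_eq_zero_iff _ n).mp hz
      obtain ⟨q, hq⟩ := hdvd
      have hq0 : q ≠ 0 := by rintro rfl; omega
      have hq2 : q < 2 := by
        by_contra hq2
        push_neg at hq2
        have : n * 2 ≤ n * q := Nat.mul_le_mul_left n hq2
        omega
      have hq1 : q = 1 := by omega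
      rw [hq1, mul_one] at hq
      omega
    · have := add_left_cancel (a := ((d₁ + l + d₂ : ℕ) : ZMod n)) (b := c) (c := 0)
      rw [add_zero] at this
      exact this h2

lemma TwoIntervalSyz.syz_even (n d₁ l d₂ m : ℕ) (hm : m % 2 = 0) :
    twoIntervalSyzygy n d₁ l d₂ l m =
      (twoIntervalSyzygy n d₁ l d₂ l 0).image
        (fun a => a + ((m / 2 * (d₁ + d₂) : ℕ) : ZMod n)) := by
  simp only [twoIntervalSyzygy, hm, Nat.zero_div, Nat.zero_mul, Nat.cast_zero, add_zero,
    Finset.image_id', eq_self_iff_true, if_true]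

lemma TwoIntervalSyz.syz_odd (n d₁ l d₂ m : ℕ) (hm : m % 2 = 1) :
    twoIntervalSyzygy n d₁ l d₂ l m =
      (twoIntervalSyzygy n d₁ l d₂ l 0).image
        (fun a => a + (((m / 2 * (d₁ + d₂) : ℕ) : ZMod n) - (l : ZMod n))) := by
  simp only [twoIntervalSyzygy, hm, Nat.zero_div, Nat.zero_mul, Nat.cast_zero, add_zero,
    Finset.image_id', eq_self_iff_true, if_true, Nat.one_ne_zero, if_false,
    Finset.image_union, Finset.image_image]
  congr 1
  · apply Finset.image_congr
    intro a _
    simp only [Function.comp]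
    ring
  · rw [show Finset.Icc (d₁ + l + 1) (d₁ + l + d₂) = (Finset.Icc (d₁ + 1) (d₁ + d₂)).image
      (fun a => a + l) by rw [Finset.image_add_right_Icc]; congr 1 <;> ring,
      Finset.image_image]
    apply Finset.image_congr
    intro a _
    simp only [Function.comp]
    push_cast
    ring

/-- With `I` a disjoint union of two cyclic intervals of sizes
`d₁ ≠ d₂` separated by gaps of equal sizes `l₁ = l₂`, the minimal positive `m` with
`I^m = I` is `min{2n/gcd(n,k), 2·min{t ≥ 1 : tk ≡ l₂ (mod n)} + 1}`, the second candidate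
being omitted when no positive `t` satisfies `tk ≡ l₂ (mod n)`. -/
theorem twoIntervalSyzygy_period_of_ne_eq (n k d₁ l₁ d₂ l₂ : ℕ) [NeZero n]
    (hd₁ : 0 < d₁) (hd₂ : 0 < d₂) (hl₁ : 0 < l₁) (hl₂ : 0 < l₂)
    (hk : d₁ + d₂ = k) (hl : l₁ + l₂ = n - k) (hkn : k < n)
    (hd : d₁ ≠ d₂) (hleq : l₁ = l₂) :
    IsLeast {m : ℕ | 0 < m ∧
        twoIntervalSyzygy n d₁ l₁ d₂ l₂ m = twoIntervalSyzygy n d₁ l₁ d₂ l₂ 0}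
      (sInf ({2 * (n / Nat.gcd n k)} ∪
        (fun t => 2 * t + 1) '' {t : ℕ | 0 < t ∧ t * k ≡ l₂ [MOD n]})) := by
  subst hk
  subst hleq
  set k := d₁ + d₂ with hk
  have hn : n = d₁ + l₁ + d₂ + l₁ := by omega
  have hnpos : 0 < n := Nat.pos_of_ne_zero (NeZero.ne n)
  set g := Nat.gcd n k with hg
  have hgpos : 0 < g := Nat.gcd_pos_of_pos_left k hnpos
  have hgn : g ∣ n := Nat.gcd_dvd_left n k
  have hgk : g ∣ k := Nat.gcd_dvd_right n k
  -- key equivalence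
  have key : ∀ m : ℕ, (twoIntervalSyzygy n d₁ l₁ d₂ l₁ m = twoIntervalSyzygy n d₁ l₁ d₂ l₁ 0)
      ↔ (if m % 2 = 0 then n ∣ m / 2 * k else m / 2 * k ≡ l₁ [MOD n]) := by
    intro m
    rcases Nat.mod_two_eq_zero_or_one m with hm | hm
    · rw [TwoIntervalSyz.syz_even n d₁ l₁ d₂ m hm, if_pos hm]
      constructor
      · intro h
        have := TwoIntervalSyz.rigid n d₁ l₁ d₂ hn hl₁ hd₁ hd₂ hd _ h
        exact (ZMod.natCast_eq_zero_iff _ n).mp this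
      · intro h
        have : ((m / 2 * k : ℕ) : ZMod n) = 0 := (ZMod.natCast_eq_zero_iff _ n).mpr h
        rw [show ((m / 2 * (d₁ + d₂) : ℕ) : ZMod n) = 0 from this]
        simp [this]
    · rw [TwoIntervalSyz.syz_odd n d₁ l₁ d₂ m hm, if_neg (by omega)]
      constructor
      · intro h
        have := TwoIntervalSyz.rigid n d₁ l₁ d₂ hn hl₁ hd₁ hd₂ hd _ h
        have h2 : ((m / 2 * k : ℕ) : ZMod n) = ((l₁ : ℕ) : ZMod n) := by
          have := sub_eq_zero.mp this
          exact this
        exact (ZMod.natCast_eq_natCast_iff _ _ _).mp h2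
      · intro h
        have h2 : ((m / 2 * k : ℕ) : ZMod n) - (l₁ : ZMod n) = 0 := by
          rw [(ZMod.natCast_eq_natCast_iff _ _ _).mpr h]; ring
        rw [show ((m / 2 * (d₁ + d₂) : ℕ) : ZMod n) - (l₁ : ZMod n) = 0 from h2]
        simp only [h2, add_zero, Finset.image_id']
  -- characterization of the period set
  have hl₁n : l₁ < n := by omega
  have hchar : ∀ m : ℕ, (0 < m ∧ twoIntervalSyzygy n d₁ l₁ d₂ l₁ m
        = twoIntervalSyzygy n d₁ l₁ d₂ l₁ 0)
      ↔ ((∃ t, 0 < t ∧ n ∣ t * k ∧ m = 2 * t) ∨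
         (∃ t, 0 < t ∧ t * k ≡ l₁ [MOD n] ∧ m = 2 * t + 1)) := by
    intro m
    constructor
    · rintro ⟨hm0, hmeq⟩
      rw [key m] at hmeq
      rcases Nat.mod_two_eq_zero_or_one m with hm | hm
      · rw [if_pos hm] at hmeq
        exact Or.inl ⟨m / 2, by omega, hmeq, by omega⟩
      · rw [if_neg (by omega)] at hmeq
        refine Or.inr ⟨m / 2, ?_, hmeq, by omega⟩
        rcases Nat.eq_zero_or_pos (m / 2) with h0 | h0
        · exfalso
          rw [h0] at hmeq
          have h1 : (0 : ℕ) ≡ l₁ [MOD n] := by simpa using hmeq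
          have h2 : n ∣ l₁ := (Nat.modEq_zero_iff_dvd).mp h1.symm
          have := Nat.le_of_dvd hl₁ h2
          omega
        · exact h0
    · rintro (⟨t, ht0, hdvd, rfl⟩ | ⟨t, ht0, hmod, rfl⟩)
      · refine ⟨by omega, ?_⟩
        rw [key, if_pos (by omega)]
        have : 2 * t / 2 = t := by omega
        rw [this]
        exact hdvd
      · refine ⟨by omega, ?_⟩
        rw [key, if_neg (by omega)]
        have : (2 * t + 1) / 2 = t := by omega
        rw [this]
        exact hmod
  -- the candidate set
  set S : Set ℕ := {2 * (n / g)} ∪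
      (fun t => 2 * t + 1) '' {t : ℕ | 0 < t ∧ t * k ≡ l₁ [MOD n]} with hS
  have hmemS : 2 * (n / g) ∈ S := Or.inl rfl
  have hSne : S.Nonempty := ⟨_, hmemS⟩
  have hinf := Nat.sInf_mem hSne
  have hng_pos : 0 < n / g := Nat.div_pos (Nat.le_of_dvd hnpos hgn) hgpos
  have hng_dvd : n ∣ (n / g) * k := by
    refine ⟨k / g, ?_⟩
    calc n / g * k = n / g * (g * (k / g)) := by rw [Nat.mul_div_cancel' hgk]
      _ = (n / g * g) * (k / g) := by ring
      _ = n * (k / g) := by rw [Nat.div_mul_cancel hgn]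
  constructor
  · -- sInf S is a period
    rcases hinf with h | ⟨t, ⟨ht0, htk⟩, hteq⟩
    · have h' : sInf S = 2 * (n / g) := h
      show 0 < sInf S ∧ _
      rw [hchar, h']
      exact Or.inl ⟨n / g, hng_pos, hng_dvd, rfl⟩
    · show 0 < sInf S ∧ _
      rw [hchar, ← hteq]
      exact Or.inr ⟨t, ht0, htk, rfl⟩
  · -- lower bound
    intro m hm
    have hm' := (hchar m).mp hm
    rcases hm' with ⟨t, ht0, hdvd, rfl⟩ | ⟨t, ht0, hmod, rfl⟩
    · -- even case: t is a multiple of n/g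
      have hcop : Nat.Coprime (n / g) (k / g) := Nat.coprime_div_gcd_div_gcd hgpos
      have h1 : g * (n / g) ∣ g * (t * (k / g)) := by
        have e1 : g * (n / g) = n := Nat.mul_div_cancel' hgn
        have e2 : g * (t * (k / g)) = t * k := by
          rw [show g * (t * (k / g)) = t * (g * (k / g)) by ring, Nat.mul_div_cancel' hgk]
        rw [e1, e2]
        exact hdvd
      have h2 : (n / g) ∣ t * (k / g) := (mul_dvd_mul_iff_left (by omega : g ≠ 0)).mp h1
      have h3 : (n / g) ∣ t := hcop.dvd_of_dvd_mul_right h2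
      have h4 : n / g ≤ t := Nat.le_of_dvd ht0 h3
      calc sInf S ≤ 2 * (n / g) := Nat.sInf_le hmemS
        _ ≤ 2 * t := by omega
    · exact Nat.sInf_le (Or.inr ⟨t, ⟨ht0, hmod⟩, rfl⟩)
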